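/- Let n ≥ 1, let Ω ⊆ ℂⁿ be a bounded open set, let α satisfy (n−1)/n < α ≤ 1, and let Φ : Ω → ℂⁿ be holomorphic with ‖Φ(z) − Φ(ζ)‖ ≤ C₀·‖z − ζ‖^α for all z, ζ ∈ Ω. Set ε' = n·α − n + 1, so ε' ∈ (0,1]. Then there is a constant C (depending only on n, α, C₀) such that the complex Jacobian determinant u(z) = det(fderiv ℂ Φ z) satisfies |u(z)| ≤ C · d(z)^{ε' − 1} for all z ∈ Ω, where d(z) = infDist(z, Ωᶜ). In particular, |u(z)|·d(z)^{1−ε'} is bounded on Ω. -/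

import Mathlib

open Set Metric

/-- Coordinate bound in Euclidean space. -/
lemma euclid_coord_le_norm {n : ℕ} (x : EuclideanSpace ℂ (Fin n)) (i : Fin n) :
    ‖x i‖ ≤ ‖x‖ := by
  have h := PiLp.norm_sq_eq_of_L2 (fun _ : Fin n => ℂ) x
  have h1 : ‖x i‖ ^ 2 ≤ ‖x‖ ^ 2 := by
    rw [h]
    exact Finset.single_le_sum (f := fun j => ‖x j‖ ^ 2)
      (fun j _ => sq_nonneg _) (Finset.mem_univ i)
  have h2 := Real.sqrt_le_sqrt h1
  rwa [Real.sqrt_sq (norm_nonneg _), Real.sqrt_sq (norm_nonneg _)] at h2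

/-- Schwarz-type estimate: if `Φ` is holomorphic near `z` (on `ball z r ⊆ Ω`) and Hölder with
constant `C₀`, exponent `α > 0`, then `‖fderiv ℂ Φ z‖ ≤ C₀ * r ^ (α - 1)`. -/
lemma fderiv_norm_le_of_holder {n : ℕ}
    {Ω : Set (EuclideanSpace ℂ (Fin n))} (hΩ : IsOpen Ω)
    {Φ : EuclideanSpace ℂ (Fin n) → EuclideanSpace ℂ (Fin n)}
    (hΦ : DifferentiableOn ℂ Φ Ω) {C₀ α : ℝ} (hC₀ : 0 ≤ C₀) (hα : 0 < α)
    (hH : ∀ z ∈ Ω, ∀ ζ ∈ Ω, ‖Φ z - Φ ζ‖ ≤ C₀ * ‖z - ζ‖ ^ α)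
    {z : EuclideanSpace ℂ (Fin n)} (hz : z ∈ Ω) {r : ℝ} (hr : 0 < r)
    (hball : ball z r ⊆ Ω) :
    ‖fderiv ℂ Φ z‖ ≤ C₀ * r ^ (α - 1) := by
  apply ContinuousLinearMap.opNorm_le_bound _ (by positivity)
  intro v
  rcases eq_or_ne v 0 with rfl | hv
  · simp
  have hvn : (0:ℝ) < ‖v‖ := norm_pos_iff.2 hv
  set R₁ : ℝ := r / ‖v‖ with hR₁
  have hR₁pos : 0 < R₁ := div_pos hr hvn
  set g : ℂ → EuclideanSpace ℂ (Fin n) := fun t => Φ (z + t • v) with hg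
  have hmem : ∀ t : ℂ, t ∈ ball (0:ℂ) R₁ → z + t • v ∈ ball z r := by
    intro t ht
    simp only [mem_ball, dist_eq_norm] at ht ⊢
    have : ‖z + t • v - z‖ = ‖t‖ * ‖v‖ := by
      simp [norm_smul]
    rw [this]
    calc ‖t‖ * ‖v‖ < R₁ * ‖v‖ := by
          apply mul_lt_mul_of_pos_right _ hvn
          simpa using ht
      _ = r := by rw [hR₁]; field_simp
  have hgd : DifferentiableOn ℂ g (ball (0:ℂ) R₁) := by
    intro t ht
    have h1 : DifferentiableAt ℂ Φ (z + t • v) :=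
      hΦ.differentiableAt (hΩ.mem_nhds (hball (hmem t ht)))
    have h2 : DifferentiableAt ℂ (fun t : ℂ => z + t • v) t := by
      apply DifferentiableAt.const_add
      exact (differentiableAt_id.smul_const v)
    exact (h1.comp t h2).differentiableWithinAt
  have hderiv : HasDerivAt g (fderiv ℂ Φ z v) 0 := by
    have h1 : HasFDerivAt Φ (fderiv ℂ Φ z) z :=
      (hΦ.differentiableAt (hΩ.mem_nhds hz)).hasFDerivAt
    have h2 : HasDerivAt (fun t : ℂ => z + t • v) v 0 := by
      simpa using ((hasDerivAt_id (0:ℂ)).smul_const v).const_add z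
    have h1' : HasFDerivAt Φ (fderiv ℂ Φ z) (z + (0:ℂ) • v) := by simpa using h1
    exact h1'.comp_hasDerivAt 0 h2
  have hg0 : g 0 = Φ z := by simp [hg]
  have key : ∀ ε > 0, ‖fderiv ℂ Φ z v‖ ≤ (C₀ * r ^ α) / R₁ + ε := by
    intro ε hε
    have hmaps : MapsTo g (ball (0:ℂ) R₁) (ball (g 0) (C₀ * r ^ α + ε * R₁)) := by
      intro t ht
      simp only [mem_ball, dist_eq_norm]
      have h1 : ‖g t - g 0‖ ≤ C₀ * ‖(z + t • v) - z‖ ^ α := by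
        rw [hg0]
        simpa using hH (z + t • v) (hball (hmem t ht)) z hz
      have h2 : ‖(z + t • v) - z‖ ≤ r := by
        have h4 := hmem t ht
        rw [mem_ball, dist_eq_norm] at h4
        exact h4.le
      calc ‖g t - g 0‖ ≤ C₀ * ‖(z + t • v) - z‖ ^ α := h1
        _ ≤ C₀ * r ^ α := by
            apply mul_le_mul_of_nonneg_left _ hC₀
            exact Real.rpow_le_rpow (norm_nonneg _) h2 hα.le
        _ < C₀ * r ^ α + ε * R₁ := by
            have : 0 < ε * R₁ := mul_pos hε hR₁pos
            linarith
    have := Complex.norm_deriv_le_div_of_mapsTo_ball hgd (hmaps.mono_right ball_subset_closedBall) hR₁pos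
    rw [hderiv.deriv] at this
    calc ‖fderiv ℂ Φ z v‖ ≤ (C₀ * r ^ α + ε * R₁) / R₁ := this
      _ = (C₀ * r ^ α) / R₁ + ε := by field_simp
  have h4 : ‖fderiv ℂ Φ z v‖ ≤ (C₀ * r ^ α) / R₁ :=
    le_of_forall_pos_le_add key
  calc ‖fderiv ℂ Φ z v‖ ≤ (C₀ * r ^ α) / R₁ := h4
    _ = C₀ * r ^ (α - 1) * ‖v‖ := by
        rw [hR₁, Real.rpow_sub hr, Real.rpow_one]
        field_simp

set_option synthInstance.maxHeartbeats 1000000 in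
set_option maxHeartbeats 1000000 in
/-- Determinant bound from operator norm. -/
lemma det_norm_le {n : ℕ} (A : EuclideanSpace ℂ (Fin n) →L[ℂ] EuclideanSpace ℂ (Fin n)) :
    ‖A.det‖ ≤ (n.factorial : ℝ) * ‖A‖ ^ n := by
  classical
  set b := (EuclideanSpace.basisFun (Fin n) ℂ).toBasis with hb
  set M := LinearMap.toMatrix b b (A : EuclideanSpace ℂ (Fin n) →ₗ[ℂ]
    EuclideanSpace ℂ (Fin n)) with hM
  have hdet : M.det = A.det := LinearMap.det_toMatrix b _
  have hentry : ∀ i j, IsAbsoluteValue.toAbsoluteValue (norm : ℂ → ℝ) (M i j) ≤ ‖A‖ := by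
    intro i j
    have h1 : M i j = (A (b j)) i := by
      rw [hM, LinearMap.toMatrix_apply]
      rfl
    rw [h1]
    have h2 : IsAbsoluteValue.toAbsoluteValue (norm : ℂ → ℝ) ((A (b j)) i) = ‖(A (b j)) i‖ := rfl
    rw [h2]
    calc ‖(A (b j)) i‖ ≤ ‖A (b j)‖ := euclid_coord_le_norm _ _
      _ ≤ ‖A‖ * ‖b j‖ := A.le_opNorm _
      _ = ‖A‖ := by
          have : ‖b j‖ = 1 := by
            rw [hb]
            simp [OrthonormalBasis.coe_toBasis]
          rw [this, mul_one]
  have h3 := Matrix.det_le hentry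
  rw [hdet] at h3
  simpa [Fintype.card_fin, nsmul_eq_mul, IsAbsoluteValue.toAbsoluteValue_apply] using h3

/-- **Krantz, estimate on the Jacobian determinant.**  If `Φ` is holomorphic on a bounded open
set `Ω ⊆ ℂⁿ` and Lipschitz of order `α` with `(n−1)/n < α ≤ 1`, then with `ε' = nα − n + 1`
the complex Jacobian determinant `u = det (fderiv ℂ Φ)` satisfies
`|u(z)| ≤ C d(z)^{ε'−1}` on `Ω`; in particular `|u(z)| d(z)^{1−ε'}` is bounded on `Ω`. -/
theorem jacobian_det_bound_of_lipschitz (n : ℕ) (hn : 1 ≤ n)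
    (α : ℝ) (hα : ((n : ℝ) - 1) / n < α) (hα1 : α ≤ 1) (C₀ : ℝ) (hC₀ : 0 ≤ C₀)
    (ε' : ℝ) (hε' : ε' = n * α - n + 1) :
    ∃ C : ℝ, ∀ Ω : Set (EuclideanSpace ℂ (Fin n)), IsOpen Ω → Bornology.IsBounded Ω →
      ∀ Φ : EuclideanSpace ℂ (Fin n) → EuclideanSpace ℂ (Fin n), DifferentiableOn ℂ Φ Ω →
      (∀ z ∈ Ω, ∀ ζ ∈ Ω, ‖Φ z - Φ ζ‖ ≤ C₀ * ‖z - ζ‖ ^ α) →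
      ∀ z ∈ Ω, ‖(fderiv ℂ Φ z).det‖ ≤ C * infDist z Ωᶜ ^ (ε' - 1) := by
  have hnR : (0:ℝ) < n := by exact_mod_cast hn
  have hn1 : (1:ℝ) ≤ n := by exact_mod_cast hn
  have hαpos : 0 < α := lt_of_le_of_lt (div_nonneg (by linarith) hnR.le) hα
  refine ⟨(n.factorial : ℝ) * C₀ ^ n, ?_⟩
  intro Ω hΩ hbdd Φ hΦ hH z hz
  -- nontrivial space
  haveI : Nontrivial (EuclideanSpace ℂ (Fin n)) := by
    refine ⟨EuclideanSpace.single ⟨0, hn⟩ (1:ℂ), 0, ?_⟩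
    intro h
    have := congrFun (congrArg (fun x : EuclideanSpace ℂ (Fin n) => (x : Fin n → ℂ)) h) ⟨0, hn⟩
    simpa using this
  -- complement nonempty
  have hcne : Ωᶜ.Nonempty := by
    obtain ⟨R, hR⟩ := hbdd.subset_closedBall (0 : EuclideanSpace ℂ (Fin n))
    obtain ⟨x, hx⟩ := NormedSpace.exists_lt_norm ℂ (EuclideanSpace ℂ (Fin n)) R
    refine ⟨x, fun hxΩ => ?_⟩
    have := hR hxΩ
    rw [mem_closedBall, dist_zero_right] at this
    linarith
  set r := infDist z Ωᶜ with hrdef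
  have hr : 0 < r :=
    (hΩ.isClosed_compl.notMem_iff_infDist_pos hcne).1 (by simpa using hz)
  have hball : ball z r ⊆ Ω := by
    intro w hw
    by_contra hwc
    have : r ≤ dist z w := infDist_le_dist_of_mem hwc
    rw [mem_ball, dist_comm] at hw
    linarith
  have hop : ‖fderiv ℂ Φ z‖ ≤ C₀ * r ^ (α - 1) :=
    fderiv_norm_le_of_holder hΩ hΦ hC₀ hαpos hH hz hr hball
  have hdet := det_norm_le (fderiv ℂ Φ z)
  have hpow : ‖fderiv ℂ Φ z‖ ^ n ≤ (C₀ * r ^ (α - 1)) ^ n :=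
    pow_le_pow_left₀ (norm_nonneg _) hop n
  have hrw : (C₀ * r ^ (α - 1)) ^ n = C₀ ^ n * r ^ (ε' - 1) := by
    rw [mul_pow, ← Real.rpow_natCast (r ^ (α - 1)) n, ← Real.rpow_mul hr.le]
    congr 2
    rw [hε']
    ring
  calc ‖(fderiv ℂ Φ z).det‖ ≤ (n.factorial : ℝ) * ‖fderiv ℂ Φ z‖ ^ n := hdet
    _ ≤ (n.factorial : ℝ) * (C₀ * r ^ (α - 1)) ^ n := by
        apply mul_le_mul_of_nonneg_left hpow (by positivity)
    _ = (n.factorial : ℝ) * C₀ ^ n * r ^ (ε' - 1) := by rw [hrw]; ring
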